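/- arXiv:2405.07126 — 2 statements merged into one kernel-verified Lean document; each statement's English description precedes it below -/
import Mathlib

section
/- (Jacobi triple product specialization used in the proof of Lemma 9.) Let s be a positive integer and let i ∈ {1, …, s}. In ℚ[[q]] one has the identity Σ_{k ∈ ℤ} (−1)^k q^{(2s+1)k(k+1)/2 − ki} = Π_{n ≥ 1, n ≡ 0 or ±i (mod 2s+1)} (1 − q^n). Here the bilateral sum is a summable family of power series (the exponent (2s+1)k(k+1)/2 − ki is a nonnegative integer for every k ∈ ℤ and tends to infinity as |k| → ∞), and the right-hand side is a convergent infinite product of power series with constant term 1. Equivalently, Π_{n ≥ 1, n ≢ 0, ±i (mod 2s+1)} (1 − q^n)^{−1} = (Π_{j ≥ 1}(1 − q^j))^{−1} · Σ_{k ∈ ℤ} (−1)^k q^{(2s+1)k(k+1)/2 − ki}. -/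
/-- Coefficientwise summability of a family of formal power series. -/
def PSHasSum {α : Type*} (f : α → PowerSeries ℚ) (S : PowerSeries ℚ) : Prop :=
  ∀ n : ℕ, (Function.support fun a => PowerSeries.coeff (R := ℚ) n (f a)).Finite ∧
    ∑ᶠ a, PowerSeries.coeff (R := ℚ) n (f a) = PowerSeries.coeff (R := ℚ) n S

/-- Coefficientwise convergence of an infinite product of formal power series. -/
def PSHasProd (f : ℕ → PowerSeries ℚ) (S : PowerSeries ℚ) : Prop :=
  ∀ n : ℕ, ∀ᶠ N in Filter.atTop,
    PowerSeries.coeff (R := ℚ) n (∏ j ∈ Finset.range N, f j) = PowerSeries.coeff (R := ℚ) n S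

/-- The exponent `(2s+1)k(k+1)/2 − ki`. -/
def expo (s i : ℕ) (k : ℤ) : ℤ :=
  (2 * (s : ℤ) + 1) * (k * (k + 1) / 2) - k * i

namespace JTP
open PowerSeries Finset

noncomputable section

abbrev R := PowerSeries ℚ

/-! ### Divisibility / congruence helpers -/

lemma coeff_eq_of_dvd {c n : ℕ} (h : n < c) {a b : R} (hd : (X : R) ^ c ∣ a - b) :
    (coeff (R := ℚ) n) a = (coeff (R := ℚ) n) b := by
  have := (PowerSeries.X_pow_dvd_iff.mp hd) n h
  rw [map_sub] at this
  linarith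

lemma dvd_prod_sub_one {c : ℕ} (s : Finset ℕ) (f : ℕ → R)
    (h : ∀ j ∈ s, (X : R) ^ c ∣ f j - 1) : (X : R) ^ c ∣ (∏ j ∈ s, f j) - 1 := by
  classical
  induction s using Finset.induction_on with
  | empty => simp
  | insert a t hx ih =>
    rw [Finset.prod_insert hx]
    have h1 : (X : R) ^ c ∣ f a - 1 := h a (Finset.mem_insert_self a t)
    have h2 : (X : R) ^ c ∣ (∏ j ∈ t, f j) - 1 := ih fun j hj => h j (Finset.mem_insert_of_mem hj)
    have he : f a * (∏ j ∈ t, f j) - 1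
        = (f a - 1) * (∏ j ∈ t, f j) + ((∏ j ∈ t, f j) - 1) := by ring
    rw [he]
    exact dvd_add (Dvd.dvd.mul_right h1 _) h2

lemma dvd_sub_one_of_le {c a : ℕ} (h : c ≤ a) : (X : R) ^ c ∣ (1 - (X : R) ^ a) - 1 := by
  have he : (1 - (X : R) ^ a) - 1 = (X:R)^c * (-(X:R)^(a - c)) := by
    rw [mul_neg, ← pow_add, Nat.add_sub_cancel' h]; ring
  rw [he]; exact Dvd.intro _ rfl

lemma dvd_of_mul_right {c : ℕ} {x u y : R} (hxy : x * u = y)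
    (hu : (X : R) ^ c ∣ u - 1) (hy : (X : R) ^ c ∣ y - 1) : (X : R) ^ c ∣ x - 1 := by
  have he : x - 1 = (y - 1) - x * (u - 1) := by rw [← hxy]; ring
  rw [he]
  exact dvd_sub hy (Dvd.dvd.mul_left hu x)

/-! ### Canonical limits of infinite products -/

/-- canonical limit of a product whose factors tend to 1 -/
def plim (f : ℕ → R) : R := PowerSeries.mk fun n => (coeff (R := ℚ) n) (∏ j ∈ range (n + 1), f j)

lemma dvd_tail_prod {f : ℕ → R} (hf : ∀ j, (X : R) ^ (j + 1) ∣ f j - 1) {n a b : ℕ}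
    (hna : n + 1 ≤ a) :
    (X : R) ^ (n + 1) ∣ (∏ j ∈ Finset.Ico a b, f j) - 1 := by
  apply dvd_prod_sub_one
  intro j hj
  rw [Finset.mem_Ico] at hj
  exact dvd_trans (pow_dvd_pow _ (by omega)) (hf j)

lemma coeff_prod_stable {f : ℕ → R} (hf : ∀ j, (X : R) ^ (j + 1) ∣ f j - 1) {n M M' : ℕ}
    (h1 : n + 1 ≤ M) (h2 : M ≤ M') :
    (coeff (R := ℚ) n) (∏ j ∈ range M', f j) = (coeff (R := ℚ) n) (∏ j ∈ range M, f j) := by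
  apply coeff_eq_of_dvd (Nat.lt_succ_self n)
  rw [range_eq_Ico, range_eq_Ico, ← Finset.prod_Ico_consecutive f (Nat.zero_le M) h2]
  have he : (∏ j ∈ Finset.Ico 0 M, f j) * (∏ j ∈ Finset.Ico M M', f j) - ∏ j ∈ Finset.Ico 0 M, f j
      = (∏ j ∈ Finset.Ico 0 M, f j) * ((∏ j ∈ Finset.Ico M M', f j) - 1) := by ring
  rw [he]
  exact Dvd.dvd.mul_left (dvd_tail_prod hf h1) _

lemma coeff_plim {f : ℕ → R} (hf : ∀ j, (X : R) ^ (j + 1) ∣ f j - 1) {n M : ℕ}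
    (h1 : n + 1 ≤ M) : (coeff (R := ℚ) n) (∏ j ∈ range M, f j) = (coeff (R := ℚ) n) (plim f) := by
  rw [plim, PowerSeries.coeff_mk]
  rcases le_total (n+1) M with h | h
  · exact coeff_prod_stable hf le_rfl h
  · exact (coeff_prod_stable hf h1 h).symm

lemma psHasProd_plim {f : ℕ → R} (hf : ∀ j, (X : R) ^ (j + 1) ∣ f j - 1) :
    PSHasProd f (plim f) := by
  intro n
  rw [Filter.eventually_atTop]
  exact ⟨n + 1, fun M hM => coeff_plim hf hM⟩

/-! ### Gaussian binomials at `q = X^N` -/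

def gb (N : ℕ) : ℕ → ℕ → R
  | 0, 0 => 1
  | 0, _ + 1 => 0
  | _ + 1, 0 => 1
  | n + 1, r + 1 => gb N n (r + 1) + (X : R) ^ (N * (n - r)) * gb N n r

lemma gb_succ_succ (N n r : ℕ) :
    gb N (n + 1) (r + 1) = gb N n (r + 1) + (X : R) ^ (N * (n - r)) * gb N n r := rfl

lemma gb_zero_left (N n : ℕ) : gb N n 0 = 1 := by cases n <;> rfl

lemma gb_zero (N : ℕ) {n r : ℕ} (h : n < r) : gb N n r = 0 := by
  induction n generalizing r with
  | zero => match r, h with | r + 1, _ => rfl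
  | succ n ih =>
    match r, h with
    | r + 1, h => rw [gb_succ_succ, ih (by omega), ih (by omega)]; ring

lemma gb_diag (N : ℕ) (n : ℕ) : gb N n n = 1 := by
  induction n with
  | zero => rfl
  | succ n ih => rw [gb_succ_succ, gb_zero N (by omega), ih]; simp

def ch (n : ℕ) : ℕ := ∑ j ∈ range n, j

lemma ch_succ (n : ℕ) : ch (n + 1) = ch n + n := Finset.sum_range_succ _ _

lemma two_mul_ch (n : ℕ) : 2 * ch n = n * (n - 1) := by
  rw [ch, Nat.mul_comm]; exact Finset.sum_range_id_mul_two n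

def poch (N a : ℕ) : R := ∏ j ∈ range a, (1 - (X : R) ^ (N * (j + 1)))

lemma poch_succ (N a : ℕ) : poch N (a + 1) = poch N a * (1 - (X : R) ^ (N * (a + 1))) :=
  Finset.prod_range_succ _ _

lemma constantCoeff_poch (N a : ℕ) (hN : 0 < N) : constantCoeff (R := ℚ) (poch N a) = 1 := by
  rw [poch, map_prod]
  apply Finset.prod_eq_one
  intro j _
  rw [map_sub, map_one, map_pow, PowerSeries.constantCoeff_X, zero_pow (by positivity)]
  ring

lemma poch_ne_zero (N a : ℕ) (hN : 0 < N) : poch N a ≠ 0 := by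
  intro h
  have := constantCoeff_poch N a hN
  rw [h, map_zero] at this
  exact one_ne_zero this.symm

lemma poch_split (N : ℕ) {u v : ℕ} (h : u ≤ v) :
    poch N v = poch N u * ∏ j ∈ Finset.Ico u v, (1 - (X:R)^(N*(j+1))) := by
  rw [poch, poch, range_eq_Ico, range_eq_Ico]
  exact (Finset.prod_Ico_consecutive (fun j => (1 - (X:R)^(N*(j+1)))) (Nat.zero_le u) h).symm

lemma gb_poch (N : ℕ) : ∀ n r : ℕ, r ≤ n → gb N n r * poch N r * poch N (n - r) = poch N n := by
  intro n
  induction n with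
  | zero => intro r hr; interval_cases r; simp [gb_zero_left, poch]
  | succ n ih =>
    intro r hr
    match r with
    | 0 => simp [gb_zero_left, poch]
    | t + 1 =>
      have hsub : n + 1 - (t + 1) = n - t := by omega
      rw [gb_succ_succ, hsub]
      rcases Nat.lt_or_ge t n with htn | htn
      · have e1 : n - t = (n - (t+1)) + 1 := by omega
        have e2 : n - (t + 1) + 1 = n - t := by omega
        have A : gb N n (t+1) * poch N (t+1) * poch N (n - t)
            = poch N n * (1 - (X:R) ^ (N * (n - t))) := by
          conv_lhs => rw [e1, poch_succ N (n - (t+1)), e2]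
          calc gb N n (t+1) * poch N (t+1) * (poch N (n - (t+1)) * (1 - (X:R)^(N * (n - t))))
              = gb N n (t+1) * poch N (t+1) * poch N (n - (t+1)) * (1 - (X:R)^(N * (n - t))) := by
                ring
            _ = poch N n * (1 - (X:R) ^ (N * (n - t))) := by rw [ih (t+1) (by omega)]
        have B : (X : R) ^ (N * (n - t)) * gb N n t * poch N (t+1) * poch N (n - t)
            = (X:R) ^ (N * (n - t)) * (1 - (X:R)^(N * (t+1))) * poch N n := by
          rw [poch_succ N t]
          calc (X : R) ^ (N * (n - t)) * gb N n t
                * (poch N t * (1 - (X:R)^(N*(t+1)))) * poch N (n - t)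
              = (X : R) ^ (N * (n - t)) * (1 - (X:R)^(N*(t+1)))
                * (gb N n t * poch N t * poch N (n - t)) := by ring
            _ = (X:R) ^ (N * (n - t)) * (1 - (X:R)^(N * (t+1))) * poch N n := by
                rw [ih t (by omega)]
        calc (gb N n (t+1) + (X : R) ^ (N * (n - t)) * gb N n t) * poch N (t+1) * poch N (n - t)
            = gb N n (t+1) * poch N (t+1) * poch N (n - t)
              + (X : R) ^ (N * (n - t)) * gb N n t * poch N (t+1) * poch N (n - t) := by ring
          _ = poch N n * (1 - (X:R) ^ (N * (n - t)))
              + (X:R) ^ (N * (n - t)) * (1 - (X:R)^(N * (t+1))) * poch N n := by rw [A, B]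
          _ = poch N n * (1 - (X:R) ^ (N * (n+1))) := by
              have hexp : N * (n - t) + N * (t + 1) = N * (n + 1) := by
                rw [← Nat.mul_add]; congr 1; omega
              rw [← hexp, pow_add]; ring
          _ = poch N (n + 1) := (poch_succ N n).symm
      · have : t = n := by omega
        subst this
        rw [gb_zero N (by omega), gb_diag, Nat.sub_self]
        show ((0 : R) + _) * _ * poch N 0 = _
        simp [poch]

lemma gb_poch_dvd (N : ℕ) (hN : 0 < N) {m r : ℕ} (hr : r ≤ 2*m) :
    (X:R)^(min r (2*m - r) + 1) ∣ gb N (2*m) r * poch N m - 1 := by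
  set a := min r (2*m - r) with ha
  have hab : poch N r * poch N (2*m - r) = poch N a * poch N (2*m - a) := by
    rcases le_total r (2*m - r) with h | h
    · have h0 : a = r := by omega
      rw [h0]
    · have h1 : a = 2*m - r := by omega
      have h3 : 2*m - (2*m - r) = r := by omega
      rw [h1, h3, mul_comm]
  have ham : a ≤ m := by omega
  have hmb : m ≤ 2*m - a := by omega
  have key := gb_poch N (2*m) r hr
  rw [mul_assoc, hab] at key
  rw [poch_split N (show a ≤ 2*m by omega)] at key
  rw [poch_split N hmb] at key
  have hc : poch N a * (gb N (2*m) r * poch N m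
        * ∏ j ∈ Finset.Ico m (2*m-a), (1 - (X:R)^(N*(j+1))))
      = poch N a * ∏ j ∈ Finset.Ico a (2*m), (1 - (X:R)^(N*(j+1))) := by
    rw [← key]; ring
  have hcan := mul_left_cancel₀ (poch_ne_zero N a hN) hc
  have hT1 : (X:R)^(a+1) ∣ (∏ j ∈ Finset.Ico a (2*m), (1 - (X:R)^(N*(j+1)))) - 1 := by
    apply dvd_prod_sub_one
    intro j hj
    rw [Finset.mem_Ico] at hj
    apply dvd_sub_one_of_le
    calc a + 1 ≤ j + 1 := by omega
      _ ≤ N * (j+1) := Nat.le_mul_of_pos_left _ hN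
  have hT2 : (X:R)^(a+1) ∣ (∏ j ∈ Finset.Ico m (2*m-a), (1 - (X:R)^(N*(j+1)))) - 1 := by
    apply dvd_prod_sub_one
    intro j hj
    rw [Finset.mem_Ico] at hj
    apply dvd_sub_one_of_le
    calc a + 1 ≤ j + 1 := by omega
      _ ≤ N * (j+1) := Nat.le_mul_of_pos_left _ hN
  exact dvd_of_mul_right hcan hT2 hT1

/-! ### the finite Gauss identity -/

lemma gauss (N d : ℕ) (n : ℕ) : (∏ j ∈ range n, ((X:R)^d - (X:R)^(N*j)))
    = ∑ r ∈ range (n+1), (-1:R)^r * gb N n r * (X:R)^(N * ch r + d * (n - r)) := by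
  induction n with
  | zero => simp [gb_zero_left, ch]
  | succ n ih =>
    have key : ∑ r ∈ range (n+2), (-1:R)^r * gb N (n+1) r * (X:R)^(N * ch r + d * (n+1 - r))
        = (∑ r ∈ range (n+1), (-1:R)^r * gb N n r * (X:R)^(N * ch r + d * (n - r)))
          * ((X:R)^d - (X:R)^(N*n)) := by
      rw [Finset.sum_range_succ'
        (fun r => (-1:R)^r * gb N (n+1) r * (X:R)^(N * ch r + d * (n+1 - r))) (n+1)]
      have F0 : (-1:R)^0 * gb N (n+1) 0 * (X:R)^(N * ch 0 + d * (n+1 - 0)) = (X:R)^(d*(n+1)) := by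
        simp [gb_zero_left, ch]
      rw [F0]
      have step : ∀ r ∈ range (n+1),
          (-1:R)^(r+1) * gb N (n+1) (r+1) * (X:R)^(N * ch (r+1) + d * (n+1 - (r+1)))
          = ((-1:R)^(r+1) * gb N n (r+1) * (X:R)^(N * ch (r+1) + d * (n+1 - (r+1))))
            - ((-1:R)^r * gb N n r * (X:R)^(N * ch r + d * (n - r))) * (X:R)^(N*n) := by
        intro r hr
        rw [mem_range] at hr
        rw [gb_succ_succ]
        have hnr : n + 1 - (r + 1) = n - r := by omega
        have e2 : N * (n - r) + (N * ch (r+1) + d * (n + 1 - (r+1)))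
            = (N * ch r + d * (n - r)) + N * n := by
          rw [hnr, ch_succ]
          have h3 : N * (n - r) + N * r = N * n := by
            rw [← Nat.mul_add]; congr 1; omega
          calc N * (n - r) + (N * (ch r + r) + d * (n - r))
              = N * ch r + d * (n - r) + (N * (n - r) + N * r) := by ring
            _ = N * ch r + d * (n - r) + N * n := by rw [h3]
        calc (-1:R)^(r+1) * (gb N n (r+1) + (X : R) ^ (N * (n - r)) * gb N n r)
              * (X:R)^(N * ch (r+1) + d * (n+1 - (r+1)))
            = ((-1:R)^(r+1) * gb N n (r+1) * (X:R)^(N * ch (r+1) + d * (n+1 - (r+1))))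
              + (-1:R)^(r+1) * gb N n r
                * (X:R)^(N * (n-r) + (N * ch (r+1) + d * (n+1 - (r+1)))) := by
              rw [pow_add]; ring
          _ = _ := by
              rw [e2, pow_add (X:R) (N * ch r + d * (n - r)) (N*n), pow_succ]
              ring
      rw [Finset.sum_congr rfl step, Finset.sum_sub_distrib, ← Finset.sum_mul]
      have reindex : ∑ r ∈ range (n+1),
          (-1:R)^(r+1) * gb N n (r+1) * (X:R)^(N * ch (r+1) + d * (n+1 - (r+1)))
          = (∑ t ∈ range (n+2), (-1:R)^t * gb N n t * (X:R)^(N * ch t + d * (n+1 - t)))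
            - (X:R)^(d*(n+1)) := by
        rw [Finset.sum_range_succ'
          (fun t => (-1:R)^t * gb N n t * (X:R)^(N * ch t + d * (n+1 - t))) (n+1)]
        simp [gb_zero_left, ch]
      rw [reindex]
      have trunc : ∑ t ∈ range (n+2), (-1:R)^t * gb N n t * (X:R)^(N * ch t + d * (n+1 - t))
          = (∑ t ∈ range (n+1), (-1:R)^t * gb N n t * (X:R)^(N * ch t + d * (n - t)))
            * (X:R)^d := by
        rw [Finset.sum_range_succ, gb_zero N (by omega)]
        rw [Finset.sum_mul]
        simp only [mul_zero, zero_mul, add_zero]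
        apply Finset.sum_congr rfl
        intro t ht
        rw [mem_range] at ht
        have he : N * ch t + d * (n + 1 - t) = (N * ch t + d * (n - t)) + d := by
          have : d * (n + 1 - t) = d * (n - t) + d := by
            rw [← Nat.mul_succ]; congr 1; omega
          omega
        rw [he, pow_add]
        ring
      rw [trunc]
      ring
    rw [Finset.prod_range_succ, ih, ← key]

/-! ### splitting the product -/

def AA1 (N i m : ℕ) : R := ∏ t ∈ range m, (1 - (X : R) ^ (N * t + i))
def AA2 (N i m : ℕ) : R := ∏ t ∈ range m, (1 - (X : R) ^ (N * (t + 1) - i))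
def prodQ (N i m : ℕ) : R :=
  ∏ t ∈ range m, ((1 - (X:R)^(N*t+i)) * (1 - (X:R)^(N*(t+1)-i)) * (1 - (X:R)^(N*(t+1))))

lemma prodQ_eq (N i m : ℕ) : prodQ N i m = AA1 N i m * AA2 N i m * poch N m := by
  rw [prodQ, AA1, AA2, poch, ← Finset.prod_mul_distrib, ← Finset.prod_mul_distrib]

lemma split1 (N i m : ℕ) (hm : 1 ≤ m) :
    (∏ j ∈ range m, ((X:R)^(N*(m-1)+i) - (X:R)^(N*j)))
      = (-1:R)^m * (X:R)^(N * ch m) * AA1 N i m := by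
  have hpt : ∀ j ∈ range m, ((X:R)^(N*(m-1)+i) - (X:R)^(N*j))
      = (-1) * ((X:R)^(N*j) * (1 - (X:R)^(N*(m-1-j)+i))) := by
    intro j hj
    rw [mem_range] at hj
    have he : N*j + (N*(m-1-j)+i) = N*(m-1)+i := by
      zify [hm]
      have hc : ((m:ℤ) - 1 - j : ℤ) = ((m - 1 - j : ℕ) : ℤ) := by
        rw [Nat.cast_sub (by omega), Nat.cast_sub (by omega)]; push_cast; ring
      rw [← hc]; ring
    calc (X:R)^(N*(m-1)+i) - (X:R)^(N*j)
        = (X:R)^(N*j + (N*(m-1-j)+i)) - (X:R)^(N*j) := by rw [he]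
      _ = (-1) * ((X:R)^(N*j) * (1 - (X:R)^(N*(m-1-j)+i))) := by rw [pow_add]; ring
  rw [Finset.prod_congr rfl hpt, Finset.prod_mul_distrib, Finset.prod_mul_distrib,
    Finset.prod_const, Finset.prod_pow_eq_pow_sum]
  have h1 : ∑ j ∈ range m, N * j = N * ch m := by rw [ch, Finset.mul_sum]
  have h2 : (∏ j ∈ range m, (1 - (X:R)^(N*(m-1-j)+i))) = AA1 N i m := by
    rw [AA1]
    exact Finset.prod_range_reflect (fun t => 1 - (X:R)^(N*t+i)) m
  rw [h1, h2, Finset.card_range]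
  ring

lemma split2 (N i m : ℕ) (hiN : i < N) (hm : 1 ≤ m) :
    (∏ t ∈ range m, ((X:R)^(N*(m-1)+i) - (X:R)^(N*(m+t))))
      = (X:R)^((N*(m-1)+i) * m) * AA2 N i m := by
  have hpt : ∀ t ∈ range m, ((X:R)^(N*(m-1)+i) - (X:R)^(N*(m+t)))
      = (X:R)^(N*(m-1)+i) * (1 - (X:R)^(N*(t+1)-i)) := by
    intro t ht
    have hle : i ≤ N*(t+1) := le_trans (le_of_lt hiN) (Nat.le_mul_of_pos_right N (by omega))
    have he : (N*(m-1)+i) + (N*(t+1)-i) = N*(m+t) := by zify [hle, hm]; ring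
    rw [mul_sub, mul_one, ← pow_add, he]
  rw [Finset.prod_congr rfl hpt, Finset.prod_mul_distrib, Finset.prod_const, ← pow_mul, AA2,
    Finset.card_range]

/-! ### integer arithmetic for the exponents -/

lemma two_mul_ch_int (a : ℕ) : 2 * (ch a : ℤ) = a * a - a := by
  have h := two_mul_ch a
  have hc : ((2 * ch a : ℕ) : ℤ) = ((a * (a - 1) : ℕ) : ℤ) := by rw [h]
  push_cast at hc
  rcases Nat.eq_zero_or_pos a with rfl | ha
  · simp [ch]
  · rw [Nat.cast_sub ha] at hc
    push_cast at hc
    linear_combination hc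

lemma expo_two (s i : ℕ) (k : ℤ) :
    2 * expo s i k = k * ((2*(s:ℤ)+1) * k + (2*(s:ℤ)+1) - 2*i) := by
  have he : (2:ℤ) ∣ k * (k + 1) := (Int.even_mul_succ_self k).two_dvd
  have h : 2 * (k*(k+1)/2) = k*(k+1) := Int.mul_ediv_cancel' he
  rw [expo]
  linear_combination (2*(s:ℤ)+1) * h

lemma expo_nonneg (s i : ℕ) (hi1 : 1 ≤ i) (hi2 : i ≤ s) (k : ℤ) : 0 ≤ expo s i k := by
  have h := expo_two s i k
  have hi1' : (1:ℤ) ≤ i := by exact_mod_cast hi1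
  have hi2' : (i:ℤ) ≤ s := by exact_mod_cast hi2
  rcases le_or_gt 0 k with hk | hk
  · have hA : (0:ℤ) ≤ (2*(s:ℤ)+1) * k + (2*(s:ℤ)+1) - 2*i := by nlinarith
    nlinarith [mul_nonneg hk hA]
  · have hA : (2*(s:ℤ)+1) * k + (2*(s:ℤ)+1) - 2*i ≤ 0 := by nlinarith
    nlinarith [mul_nonneg (neg_nonneg.mpr (le_of_lt hk)) (neg_nonneg.mpr hA)]

lemma expo_le_bound (s i : ℕ) (hi1 : 1 ≤ i) (hi2 : i ≤ s) {k : ℤ} {n : ℕ}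
    (h : expo s i k ≤ n) : -(n:ℤ) ≤ k ∧ k ≤ n := by
  have h2 := expo_two s i k
  have hi1' : (1:ℤ) ≤ i := by exact_mod_cast hi1
  have hi2' : (i:ℤ) ≤ s := by exact_mod_cast hi2
  constructor
  · rcases le_or_gt 0 k with hk | hk
    · have : (0:ℤ) ≤ n := by positivity
      omega
    · have hk1 : k ≤ -1 := by omega
      have hA : (2*(s:ℤ)+1) * k + (2*(s:ℤ)+1) - 2*i + 2 ≤ 0 := by nlinarith
      have := mul_nonneg (neg_nonneg.mpr (le_of_lt hk)) (neg_nonneg.mpr hA)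
      have hkle : -k ≤ expo s i k := by nlinarith
      linarith
  · rcases le_or_gt k 0 with hk | hk
    · have : (0:ℤ) ≤ n := by positivity
      omega
    · have hk1 : 1 ≤ k := by omega
      have hA : (0:ℤ) ≤ (2*(s:ℤ)+1) * k + (2*(s:ℤ)+1) - 2*i - 2 := by nlinarith
      have := mul_nonneg (by omega : (0:ℤ) ≤ k) hA
      have hkle : k ≤ expo s i k := by nlinarith
      linarith

lemma exp_eq (s i m r : ℕ) (hi1 : 1 ≤ i) (hi2 : i ≤ s) (hm : 1 ≤ m) (hr : r ≤ 2*m) :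
    (2*s+1) * ch r + ((2*s+1)*(m-1)+i) * (2*m - r)
      = ((2*s+1) * ch m + ((2*s+1)*(m-1)+i) * m) + (expo s i ((r:ℤ) - m)).toNat := by
  have hnn := expo_nonneg s i hi1 hi2 ((r:ℤ) - m)
  have hchr := two_mul_ch_int r
  have hchm := two_mul_ch_int m
  have hexpo := expo_two s i ((r:ℤ) - m)
  have hZ : (2*(s:ℤ)+1) * (ch r:ℤ) + ((2*(s:ℤ)+1)*((m:ℤ)-1)+(i:ℤ)) * (2*(m:ℤ) - (r:ℤ))
      = ((2*(s:ℤ)+1) * (ch m:ℤ) + ((2*(s:ℤ)+1)*((m:ℤ)-1)+(i:ℤ)) * (m:ℤ))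
        + expo s i ((r:ℤ) - m) := by
    have h2 : 2 * ((2*(s:ℤ)+1) * (ch r:ℤ) + ((2*(s:ℤ)+1)*((m:ℤ)-1)+(i:ℤ)) * (2*(m:ℤ) - (r:ℤ)))
        = 2 * (((2*(s:ℤ)+1) * (ch m:ℤ) + ((2*(s:ℤ)+1)*((m:ℤ)-1)+(i:ℤ)) * (m:ℤ))
          + expo s i ((r:ℤ) - m)) := by
      linear_combination (2*(s:ℤ)+1) * hchr - (2*(s:ℤ)+1) * hchm - hexpo
    linarith
  have hA : ((2*m - r : ℕ):ℤ) = 2*(m:ℤ) - r := by omega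
  have hB : ((m - 1 : ℕ):ℤ) = (m:ℤ) - 1 := by omega
  have goalZ : (((2*s+1) * ch r + ((2*s+1)*(m-1)+i) * (2*m - r) : ℕ) : ℤ)
      = ((((2*s+1) * ch m + ((2*s+1)*(m-1)+i) * m) + (expo s i ((r:ℤ) - m)).toNat : ℕ) : ℤ) := by
    push_cast [hA, hB, Int.toNat_of_nonneg hnn]
    linear_combination hZ
  exact_mod_cast goalZ

/-! ### the key identity -/

lemma neg_one_pow_R (a : ℕ) : ((-1:R))^a = PowerSeries.C (R := ℚ) ((-1:ℚ)^a) := by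
  rw [map_pow, map_neg, map_one]

lemma key_identity (s i m : ℕ) (hi1 : 1 ≤ i) (hi2 : i ≤ s) (hm : 1 ≤ m) :
    prodQ (2*s+1) i m * (X:R)^((2*s+1) * ch m + ((2*s+1)*(m-1)+i) * m)
      = ∑ r ∈ range (2*m+1), ((-1:ℚ)^(m+r)) •
          ((gb (2*s+1) (2*m) r * poch (2*s+1) m) *
            (X:R)^(((2*s+1) * ch m + ((2*s+1)*(m-1)+i) * m)
              + (expo s i ((r:ℤ) - m)).toNat)) := by
  set N := 2*s+1 with hN
  set d := N*(m-1)+i with hd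
  have hiN : i < N := by omega
  have hg := gauss N d (2*m)
  have hsplit : (∏ j ∈ range (2*m), ((X:R)^d - (X:R)^(N*j)))
      = (-1:R)^m * ((X:R)^(N * ch m + d * m) * (AA1 N i m * AA2 N i m)) := by
    rw [two_mul, Finset.prod_range_add, split1 N i m hm, split2 N i m hiN hm,
      pow_add]
    ring
  rw [hsplit] at hg
  have hmul := congrArg (fun z => (-1:R)^m * poch N m * z) hg
  have hsq : (-1:R)^m * (-1:R)^m = 1 := by
    rw [← pow_add, ← two_mul, pow_mul]
    norm_num
  have hlhs : (-1:R)^m * poch N m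
        * ((-1:R)^m * ((X:R)^(N * ch m + d * m) * (AA1 N i m * AA2 N i m)))
      = prodQ N i m * (X:R)^(N * ch m + d * m) := by
    rw [prodQ_eq]
    calc (-1:R)^m * poch N m
          * ((-1:R)^m * ((X:R)^(N * ch m + d * m) * (AA1 N i m * AA2 N i m)))
        = ((-1:R)^m * (-1:R)^m)
          * (AA1 N i m * AA2 N i m * poch N m * (X:R)^(N * ch m + d * m)) := by
          ring
      _ = AA1 N i m * AA2 N i m * poch N m * (X:R)^(N * ch m + d * m) := by rw [hsq]; ring
  rw [hlhs] at hmul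
  rw [hmul, Finset.mul_sum]
  apply Finset.sum_congr rfl
  intro r hr
  rw [mem_range] at hr
  have hexp : N * ch r + d * (2*m - r) = (N * ch m + d * m) + (expo s i ((r:ℤ) - m)).toNat :=
    exp_eq s i m r hi1 hi2 hm (by omega)
  rw [hexp, PowerSeries.smul_eq_C_mul, ← neg_one_pow_R (m+r), pow_add]
  ring

/-! ### coefficient extraction -/

lemma coeff_prodQ (s i n m : ℕ) (hi1 : 1 ≤ i) (hi2 : i ≤ s) (hm1 : 1 ≤ m) (hm2 : 2*n ≤ m) :
    (coeff (R := ℚ) n) (prodQ (2*s+1) i m)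
      = ∑ r ∈ range (2*m+1), (-1:ℚ)^(m+r) *
          (if (expo s i ((r:ℤ) - m)).toNat = n then 1 else 0) := by
  have hk := congrArg (coeff (R := ℚ) (n + ((2*s+1) * ch m + ((2*s+1)*(m-1)+i) * m)))
    (key_identity s i m hi1 hi2 hm1)
  rw [PowerSeries.coeff_mul_X_pow] at hk
  rw [map_sum] at hk
  rw [hk]
  apply Finset.sum_congr rfl
  intro r hr
  rw [mem_range] at hr
  have hr2 : r ≤ 2*m := by omega
  set ee := (expo s i ((r:ℤ) - m)).toNat with hee
  rw [PowerSeries.coeff_smul, smul_eq_mul]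
  congr 1
  rw [PowerSeries.coeff_mul_X_pow']
  by_cases hle : ee ≤ n
  · rw [if_pos (by omega : ((2*s+1) * ch m + ((2*s+1)*(m-1)+i) * m) + ee
      ≤ n + ((2*s+1) * ch m + ((2*s+1)*(m-1)+i) * m))]
    have hdiff : n + ((2*s+1) * ch m + ((2*s+1)*(m-1)+i) * m)
        - (((2*s+1) * ch m + ((2*s+1)*(m-1)+i) * m) + ee) = n - ee := by omega
    rw [hdiff]
    have hnn := expo_nonneg s i hi1 hi2 ((r:ℤ) - m)
    have htn : ((ee:ℕ):ℤ) = expo s i ((r:ℤ) - m) := by rw [hee]; exact Int.toNat_of_nonneg hnn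
    have hEn : expo s i ((r:ℤ) - m) ≤ (n:ℤ) := by rw [← htn]; exact_mod_cast hle
    have hb := expo_le_bound s i hi1 hi2 hEn
    have hmin : n ≤ min r (2*m - r) := by omega
    have hcoe := coeff_eq_of_dvd (show n - ee < min r (2*m - r) + 1 by omega)
      (gb_poch_dvd (2*s+1) (by omega) hr2)
    rw [hcoe, PowerSeries.coeff_one]
    by_cases heq : ee = n
    · rw [if_pos (by omega), if_pos heq]
    · rw [if_neg (by omega), if_neg heq]
  · rw [if_neg (by omega), if_neg (by omega)]

/-! ### the selected factors -/

def gfun (s i : ℕ) (n : ℕ) : R :=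
  if (n + 1) % (2 * s + 1) = 0 ∨ (n + 1) % (2 * s + 1) = i ∨
      ((n + 1) + i) % (2 * s + 1) = 0
  then 1 - (X : R) ^ (n + 1) else 1

lemma cond_iff (s i : ℕ) (hi1 : 1 ≤ i) (hi2 : i ≤ s) (t r : ℕ) (hr : r < 2*s+1) :
    (((2*s+1)*t + r + 1) % (2*s+1) = 0 ∨ ((2*s+1)*t + r + 1) % (2*s+1) = i ∨
      (((2*s+1)*t + r + 1) + i) % (2*s+1) = 0)
      ↔ (r = i - 1 ∨ r = (2*s+1) - i - 1 ∨ r = 2*s) := by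
  have h1 : ((2*s+1)*t + r + 1) % (2*s+1) = (r+1) % (2*s+1) := by
    rw [add_assoc]; exact Nat.mul_add_mod _ _ _
  have h2 : (((2*s+1)*t + r + 1) + i) % (2*s+1) = (r+1+i) % (2*s+1) := by
    rw [add_assoc, add_assoc, ← add_assoc r 1 i]; exact Nat.mul_add_mod _ _ _
  rw [h1, h2]
  rcases Nat.lt_or_ge (r+1) (2*s+1) with hA | hA
  · rw [Nat.mod_eq_of_lt hA]
    rcases Nat.lt_or_ge (r+1+i) (2*s+1) with hB | hB
    · rw [Nat.mod_eq_of_lt hB]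
      omega
    · rw [Nat.mod_eq_sub_mod hB, Nat.mod_eq_of_lt (by omega)]
      omega
  · have hA' : r + 1 = 2*s+1 := by omega
    rw [hA', Nat.mod_self]
    rw [Nat.mod_eq_sub_mod (by omega), Nat.mod_eq_of_lt (by omega)]
    omega

lemma block (s i t : ℕ) (hi1 : 1 ≤ i) (hi2 : i ≤ s) :
    (∏ r ∈ range (2*s+1), gfun s i ((2*s+1)*t + r))
      = (1 - (X:R)^((2*s+1)*t+i)) * (1 - (X:R)^((2*s+1)*(t+1)-i))
        * (1 - (X:R)^((2*s+1)*(t+1))) := by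
  have hstep : ∀ r ∈ range (2*s+1), gfun s i ((2*s+1)*t + r)
      = if (r = i - 1 ∨ r = (2*s+1) - i - 1 ∨ r = 2*s)
        then (1 - (X:R)^((2*s+1)*t + r + 1)) else 1 := by
    intro r hr; rw [mem_range] at hr
    rw [gfun]
    exact if_congr (cond_iff s i hi1 hi2 t r hr) rfl rfl
  rw [Finset.prod_congr rfl hstep, ← Finset.prod_filter]
  have hset : (range (2*s+1)).filter (fun r => r = i-1 ∨ r = (2*s+1)-i-1 ∨ r = 2*s)
      = {i-1, (2*s+1)-i-1, 2*s} := by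
    ext a
    simp only [Finset.mem_filter, Finset.mem_range, Finset.mem_insert, Finset.mem_singleton]
    omega
  rw [hset]
  rw [Finset.prod_insert (by simp only [Finset.mem_insert, Finset.mem_singleton]; omega),
    Finset.prod_insert (by simp only [Finset.mem_singleton]; omega), Finset.prod_singleton]
  rw [Nat.mul_succ]
  generalize (2*s+1)*t = A
  have e1 : A + (i-1) + 1 = A + i := by omega
  have e2 : A + ((2*s+1)-i-1) + 1 = A + (2*s+1) - i := by omega
  have e3 : A + 2*s + 1 = A + (2*s+1) := by omega
  rw [e1, e2, e3]
  ring

lemma prod_g_blocks (s i m : ℕ) (hi1 : 1 ≤ i) (hi2 : i ≤ s) :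
    (∏ j ∈ range ((2*s+1)*m), gfun s i j) = prodQ (2*s+1) i m := by
  induction m with
  | zero => simp [prodQ]
  | succ m ih =>
    have hQ : prodQ (2*s+1) i (m+1) = prodQ (2*s+1) i m *
        ((1 - (X:R)^((2*s+1)*m+i)) * (1 - (X:R)^((2*s+1)*(m+1)-i))
          * (1 - (X:R)^((2*s+1)*(m+1)))) :=
      Finset.prod_range_succ _ m
    rw [Nat.mul_succ, Finset.prod_range_add, ih, block s i m hi1 hi2, hQ]

/-! ### reindexing the sum -/

lemma zpow_neg_one_sub (m r : ℕ) : ((-1:ℚ) ^ ((r:ℤ) - (m:ℤ))) = (-1:ℚ)^(m + r) := by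
  rw [zpow_sub₀ (by norm_num : (-1:ℚ) ≠ 0), zpow_natCast, zpow_natCast]
  have h : ((-1:ℚ)^m)⁻¹ = (-1:ℚ)^m := by rw [← inv_pow, inv_neg, inv_one]
  rw [div_eq_mul_inv, h, pow_add]
  ring

lemma icc_map (m : ℕ) :
    Finset.Icc (-(m:ℤ)) (m:ℤ)
      = (range (2*m+1)).map ⟨fun r : ℕ => (r:ℤ) - (m:ℤ), by intro a b h; simpa using h⟩ := by
  ext k
  simp only [Finset.mem_Icc, Finset.mem_map, Finset.mem_range, Function.Embedding.coeFn_mk]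
  dsimp only [DFunLike.coe]
  constructor
  · intro h
    refine ⟨(k + m).toNat, by omega, by omega⟩
  · rintro ⟨r, hr, rfl⟩
    omega

lemma sum_reindex (s i n m : ℕ) (hi1 : 1 ≤ i) (hi2 : i ≤ s) (hn : n ≤ m) :
    ∑ r ∈ range (2*m+1), (-1:ℚ)^(m+r) * (if (expo s i ((r:ℤ) - m)).toNat = n then 1 else 0)
      = ∑ k ∈ Finset.Icc (-(n:ℤ)) (n:ℤ),
          (-1:ℚ)^k * (if (expo s i k).toNat = n then 1 else 0) := by
  have h1 : ∑ k ∈ Finset.Icc (-(m:ℤ)) (m:ℤ), (-1:ℚ)^k * (if (expo s i k).toNat = n then 1 else 0)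
      = ∑ r ∈ range (2*m+1), (-1:ℚ)^(m+r)
          * (if (expo s i ((r:ℤ) - m)).toNat = n then 1 else 0) := by
    rw [icc_map m, Finset.sum_map]
    apply Finset.sum_congr rfl
    intro r _
    dsimp only [DFunLike.coe]
    rw [zpow_neg_one_sub]
  rw [← h1]
  apply (Finset.sum_subset (Finset.Icc_subset_Icc (by omega) (by omega)) ?_).symm
  intro k hk hnk
  rw [Finset.mem_Icc] at hk
  rw [Finset.mem_Icc] at hnk
  push_neg at hnk
  have hne : ¬ ((expo s i k).toNat = n) := by
    intro h
    have hnn := expo_nonneg s i hi1 hi2 k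
    have hE : expo s i k ≤ (n:ℤ) := by omega
    have hb := expo_le_bound s i hi1 hi2 hE
    omega
  rw [if_neg hne, mul_zero]

/-! ### the limit power series -/

def Sser (s i : ℕ) : R := PowerSeries.mk fun n =>
  ∑ k ∈ Finset.Icc (-(n:ℤ)) (n:ℤ), (-1:ℚ)^k * (if (expo s i k).toNat = n then 1 else 0)

lemma gfun_dvd (s i : ℕ) (j : ℕ) : (X:R)^(j+1) ∣ gfun s i j - 1 := by
  rw [gfun]
  split_ifs
  · exact dvd_sub_one_of_le le_rfl
  · simp

lemma coeff_prod_gfun (s i n : ℕ) (hi1 : 1 ≤ i) (hi2 : i ≤ s) {M : ℕ}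
    (hM : (2*s+1)*(2*n+2) ≤ M) :
    (coeff (R := ℚ) n) (∏ j ∈ range M, gfun s i j) = (coeff (R := ℚ) n) (Sser s i) := by
  have hbase : n + 1 ≤ (2*s+1)*(2*n+2) :=
    le_trans (by omega) (Nat.mul_le_mul_right (2*n+2) (by omega : 1 ≤ 2*s+1))
  rw [coeff_prod_stable (gfun_dvd s i) hbase hM, prod_g_blocks s i (2*n+2) hi1 hi2,
    coeff_prodQ s i n (2*n+2) hi1 hi2 (by omega) (by omega),
    sum_reindex s i n (2*n+2) hi1 hi2 (by omega), Sser, PowerSeries.coeff_mk]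

end
end JTP

set_option maxHeartbeats 1000000 in
/-- Jacobi triple product specialization:
`Σ_{k ∈ ℤ} (−1)^k q^{(2s+1)k(k+1)/2 − ki} = Π_{n ≥ 1, n ≡ 0, ±i (mod 2s+1)} (1 − q^n)`,
the exponent being a nonnegative integer for every `k ∈ ℤ`; equivalently,
`Π_{n ≥ 1, n ≢ 0, ±i (mod 2s+1)} (1 − q^n)⁻¹
  = (Π_{j ≥ 1} (1 − q^j))⁻¹ · Σ_{k ∈ ℤ} (−1)^k q^{(2s+1)k(k+1)/2 − ki}`. -/
theorem jacobi_triple_product_specialization (s i : ℕ) (hs : 1 ≤ s) (hi1 : 1 ≤ i)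
    (hi2 : i ≤ s) :
    (∀ k : ℤ, 0 ≤ expo s i k) ∧
    ∃ S : PowerSeries ℚ,
      PSHasSum (fun k : ℤ =>
        PowerSeries.C (R := ℚ) ((-1 : ℚ) ^ k) *
          (PowerSeries.X : PowerSeries ℚ) ^ (expo s i k).toNat) S ∧
      PSHasProd (fun n =>
        if (n + 1) % (2 * s + 1) = 0 ∨ (n + 1) % (2 * s + 1) = i ∨
            ((n + 1) + i) % (2 * s + 1) = 0
        then 1 - (PowerSeries.X : PowerSeries ℚ) ^ (n + 1)
        else 1) S ∧
      ∃ T U : PowerSeries ℚ,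
        PSHasProd (fun j => 1 - (PowerSeries.X : PowerSeries ℚ) ^ (j + 1)) T ∧
        PSHasProd (fun n =>
          if (n + 1) % (2 * s + 1) = 0 ∨ (n + 1) % (2 * s + 1) = i ∨
              ((n + 1) + i) % (2 * s + 1) = 0
          then 1
          else (1 - (PowerSeries.X : PowerSeries ℚ) ^ (n + 1))⁻¹) U ∧
        U = T⁻¹ * S := by
  classical
  open PowerSeries Finset JTP in
  refine ⟨expo_nonneg s i hi1 hi2, Sser s i, ?_, ?_, ?_⟩
  · -- PSHasSum
    intro n
    set f : ℤ → PowerSeries ℚ := fun k =>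
      PowerSeries.C (R := ℚ) ((-1 : ℚ) ^ k) * (PowerSeries.X : PowerSeries ℚ) ^ (expo s i k).toNat
      with hf
    have hcoeff : ∀ k : ℤ, (coeff (R := ℚ) n) (f k)
        = (-1:ℚ)^k * (if (expo s i k).toNat = n then 1 else 0) := by
      intro k
      rw [hf]
      simp only
      rw [PowerSeries.coeff_C_mul_X_pow]
      by_cases h : (expo s i k).toNat = n
      · rw [if_pos h, if_pos h.symm, mul_one]
      · rw [if_neg h, if_neg (fun hh => h hh.symm), mul_zero]
    have hsupp : (Function.support fun k => (coeff (R := ℚ) n) (f k))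
        ⊆ ↑(Finset.Icc (-(n:ℤ)) (n:ℤ)) := by
      intro k hk
      rw [Function.mem_support] at hk
      rw [hcoeff k] at hk
      have h : (expo s i k).toNat = n := by
        by_contra h
        rw [if_neg h, mul_zero] at hk
        exact hk rfl
      have hnn := expo_nonneg s i hi1 hi2 k
      have hE : expo s i k ≤ (n:ℤ) := by omega
      have hb := expo_le_bound s i hi1 hi2 hE
      simp only [Finset.coe_Icc, Set.mem_Icc]
      exact hb
    refine ⟨Set.Finite.subset (Finset.Icc (-(n:ℤ)) (n:ℤ)).finite_toSet hsupp, ?_⟩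
    rw [finsum_eq_sum_of_support_subset _ hsupp]
    rw [Sser, PowerSeries.coeff_mk]
    exact Finset.sum_congr rfl fun k _ => hcoeff k
  · -- PSHasProd for the selected factors
    intro n
    rw [Filter.eventually_atTop]
    exact ⟨(2*s+1)*(2*n+2), fun M hM => coeff_prod_gfun s i n hi1 hi2 hM⟩
  · -- T and U
    set tf : ℕ → PowerSeries ℚ := fun j => 1 - (PowerSeries.X : PowerSeries ℚ) ^ (j + 1)
      with htf
    set uf : ℕ → PowerSeries ℚ := fun n =>
      if (n + 1) % (2 * s + 1) = 0 ∨ (n + 1) % (2 * s + 1) = i ∨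
          ((n + 1) + i) % (2 * s + 1) = 0
      then 1
      else (1 - (PowerSeries.X : PowerSeries ℚ) ^ (n + 1))⁻¹ with huf
    have hconst : ∀ j : ℕ, constantCoeff (R := ℚ) (1 - (X : PowerSeries ℚ)^(j+1)) ≠ 0 := by
      intro j
      rw [map_sub, map_one, map_pow, PowerSeries.constantCoeff_X, zero_pow (by omega)]
      norm_num
    have hinv : ∀ j : ℕ, (1 - (X : PowerSeries ℚ)^(j+1))
        * (1 - (X : PowerSeries ℚ)^(j+1))⁻¹ = 1 :=
      fun j => PowerSeries.mul_inv_cancel _ (hconst j)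
    have htdvd : ∀ j, (X : PowerSeries ℚ)^(j+1) ∣ tf j - 1 := fun j =>
      dvd_sub_one_of_le le_rfl
    have hudvd : ∀ j, (X : PowerSeries ℚ)^(j+1) ∣ uf j - 1 := by
      intro j
      rw [huf]
      simp only
      split_ifs
      · simp
      · have he : (1 - (X : PowerSeries ℚ)^(j+1))⁻¹ - 1
            = (X : PowerSeries ℚ)^(j+1) * (1 - (X : PowerSeries ℚ)^(j+1))⁻¹ := by
          calc (1 - (X : PowerSeries ℚ)^(j+1))⁻¹ - 1
              = (1 - (X : PowerSeries ℚ)^(j+1))⁻¹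
                - (1 - (X : PowerSeries ℚ)^(j+1)) * (1 - (X : PowerSeries ℚ)^(j+1))⁻¹ := by
                rw [hinv]
            _ = (X : PowerSeries ℚ)^(j+1) * (1 - (X : PowerSeries ℚ)^(j+1))⁻¹ := by ring
        rw [he]
        exact Dvd.intro _ rfl
    refine ⟨plim tf, plim uf, psHasProd_plim htdvd, psHasProd_plim hudvd, ?_⟩
    -- U = T⁻¹ * S
    have hTU : plim tf * plim uf = Sser s i := by
      ext n
      set M := n + 1 + (2*s+1)*(2*n+2) with hM
      have hMb1 : n + 1 ≤ M := by omega
      have hdT : (X : PowerSeries ℚ)^(n+1) ∣ (∏ j ∈ Finset.range M, tf j) - plim tf := by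
        rw [PowerSeries.X_pow_dvd_iff]
        intro mm hmm
        rw [map_sub, sub_eq_zero]
        exact coeff_plim htdvd (by omega)
      have hdU : (X : PowerSeries ℚ)^(n+1) ∣ (∏ j ∈ Finset.range M, uf j) - plim uf := by
        rw [PowerSeries.X_pow_dvd_iff]
        intro mm hmm
        rw [map_sub, sub_eq_zero]
        exact coeff_plim hudvd (by omega)
      have hprod : (∏ j ∈ Finset.range M, tf j) * (∏ j ∈ Finset.range M, uf j)
          = ∏ j ∈ Finset.range M, gfun s i j := by
        rw [← Finset.prod_mul_distrib]
        apply Finset.prod_congr rfl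
        intro j _
        rw [htf, huf, gfun]
        simp only
        split_ifs
        · rw [mul_one]
        · rw [hinv j]
      have hd : (X : PowerSeries ℚ)^(n+1)
          ∣ plim tf * plim uf - (∏ j ∈ Finset.range M, tf j) * (∏ j ∈ Finset.range M, uf j) := by
        have he : plim tf * plim uf
              - (∏ j ∈ Finset.range M, tf j) * (∏ j ∈ Finset.range M, uf j)
            = (-(plim uf)) * ((∏ j ∈ Finset.range M, tf j) - plim tf)
              + (-(∏ j ∈ Finset.range M, tf j))
                * ((∏ j ∈ Finset.range M, uf j) - plim uf) := by ring
        rw [he]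
        exact dvd_add (Dvd.dvd.mul_left hdT _) (Dvd.dvd.mul_left hdU _)
      have h1 : (PowerSeries.coeff (R := ℚ) n) (plim tf * plim uf)
          = (PowerSeries.coeff (R := ℚ) n)
              ((∏ j ∈ Finset.range M, tf j) * (∏ j ∈ Finset.range M, uf j)) :=
        coeff_eq_of_dvd (Nat.lt_succ_self n) hd
      rw [h1, hprod]
      exact coeff_prod_gfun s i n hi1 hi2 (by omega)
    have hT0 : constantCoeff (R := ℚ) (plim tf) ≠ 0 := by
      have h0 : (PowerSeries.coeff (R := ℚ) 0) (plim tf) = 1 := by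
        rw [plim, PowerSeries.coeff_mk, Finset.prod_range_one]
        simp [htf]
      rw [← PowerSeries.coeff_zero_eq_constantCoeff_apply, h0]
      norm_num
    calc plim uf = 1 * plim uf := (one_mul _).symm
      _ = ((plim tf)⁻¹ * plim tf) * plim uf := by
          rw [PowerSeries.inv_mul_cancel _ hT0]
      _ = (plim tf)⁻¹ * (plim tf * plim uf) := by ring
      _ = (plim tf)⁻¹ * Sser s i := by rw [hTU]
end

section
/- (Lemma 11: alternative description of P^{s,i}.) Let s be a positive integer and let i ∈ {1, …, s}. For every partition λ, the following are equivalent: (a) λ contains no partition belonging to R^{s,i} (i.e., λ ∈ P^{s,i}); (b) for every partition η ∈ R^{s,i}, the multiset of parts of η is not a submultiset of the multiset of parts of λ (equivalently, the monomial p_η does not divide the monomial p_λ, where p_μ denotes the product of the variables x_{μ_1} ⋯ x_{μ_m} indexed by the parts of μ). -/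
open List

lemma pref_cons {α : Type*} (a : α) {l₁ l₂ : List α} (h : l₁ <+: l₂) :
    a :: l₁ <+: a :: l₂ := by
  obtain ⟨v, rfl⟩ := h; exact ⟨v, rfl⟩

lemma suffix_prefix_infix {α : Type*} {s1 t1 s2 t2 : List α}
    (h1 : s1 <:+ t1) (h2 : s2 <+: t2) : s1 ++ s2 <:+: t1 ++ t2 := by
  obtain ⟨u, rfl⟩ := h1
  obtain ⟨v, rfl⟩ := h2
  exact ⟨u, v, by simp⟩

lemma replicate_suffix {α : Type*} (x : α) {a c : ℕ} (h : a ≤ c) :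
    replicate a x <:+ replicate c x :=
  ⟨replicate (c - a) x, by rw [← replicate_add]; congr 1; omega⟩

lemma replicate_prefix {α : Type*} (x : α) {a c : ℕ} (h : a ≤ c) :
    replicate a x <+: replicate c x :=
  ⟨replicate (c - a) x, by rw [← replicate_add]; congr 1; omega⟩

/-- a sorted list with values in {k, k+1} is a block of k+1's followed by k's -/
lemma two_val (k : ℕ) : ∀ l : List ℕ, l.Pairwise (· ≥ ·) → (∀ x ∈ l, x = k + 1 ∨ x = k) →
    l = replicate (l.count (k+1)) (k+1) ++ replicate (l.count k) k
  | [], _, _ => by simp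
  | x :: xs, h, hx => by
    have hs := (pairwise_cons.mp h).2
    have hb := (pairwise_cons.mp h).1
    have ih := two_val k xs hs (fun y hy => hx y (mem_cons_of_mem _ hy))
    rcases hx x mem_cons_self with h2 | h2
    · subst h2
      have e1 : ((k+1) :: xs).count (k+1) = xs.count (k+1) + 1 := by simp [count_cons]
      have e2 : ((k+1) :: xs).count k = xs.count k := by
        rw [count_cons_of_ne (a := k) (b := k+1) (by omega)]
      rw [e1, e2, replicate_succ, cons_append]
      exact congrArg _ ih
    · rw [h2] at hb ⊢
      have h0 : xs.count (k+1) = 0 := by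
        rw [count_eq_zero]
        intro hmem
        have := hb _ hmem
        omega
      have e1 : (k :: xs).count (k+1) = 0 := by
        rw [count_cons_of_ne (a := k+1) (b := k) (by omega), h0]
      have e2 : (k :: xs).count k = xs.count k + 1 := by simp [count_cons]
      rw [h0] at ih
      rw [e1, e2, replicate_succ]
      simpa using ih

lemma filter_pref (k : ℕ) : ∀ l : List ℕ, l.Pairwise (· ≥ ·) → (∀ x ∈ l, x ≤ k + 1) →
    l.filter (fun x => decide (k ≤ x) && decide (x ≤ k+1)) <+: l
  | [], _, _ => by simp
  | x :: xs, h, hx => by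
    have hs := (pairwise_cons.mp h).2
    have hb := (pairwise_cons.mp h).1
    by_cases hp : k ≤ x
    · rw [filter_cons_of_pos (by simp [hp, hx x mem_cons_self])]
      exact pref_cons x (filter_pref k xs hs (fun y hy => hx y (mem_cons_of_mem _ hy)))
    · rw [filter_cons_of_neg (by simp [hp])]
      have : xs.filter (fun x => decide (k ≤ x) && decide (x ≤ k+1)) = [] := by
        rw [filter_eq_nil_iff]
        intro y hy
        have := hb y hy
        simp only [Bool.and_eq_true, decide_eq_true_eq]
        omega
      rw [this]
      exact nil_prefix

lemma filter_inf (k : ℕ) : ∀ l : List ℕ, l.Pairwise (· ≥ ·) →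
    l.filter (fun x => decide (k ≤ x) && decide (x ≤ k+1)) <:+: l
  | [], _ => by simp
  | x :: xs, h => by
    have hs := (pairwise_cons.mp h).2
    have hb := (pairwise_cons.mp h).1
    by_cases hp : k ≤ x ∧ x ≤ k + 1
    · rw [filter_cons_of_pos (by simp [hp.1, hp.2])]
      have : xs.filter (fun x => decide (k ≤ x) && decide (x ≤ k+1)) <+: xs :=
        filter_pref k xs hs (fun y hy => le_trans (hb y hy) hp.2)
      exact (pref_cons x this).isInfix
    · rw [filter_cons_of_neg (by simp; omega)]
      exact (filter_inf k xs hs).trans (infix_cons (infix_refl xs))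

lemma filter_suf (c : ℕ) : ∀ l : List ℕ, l.Pairwise (· ≥ ·) →
    l.filter (fun x => decide (x ≤ c)) <:+ l
  | [], _ => by simp
  | x :: xs, h => by
    have hs := (pairwise_cons.mp h).2
    have hb := (pairwise_cons.mp h).1
    by_cases hp : x ≤ c
    · have : (x :: xs).filter (fun x => decide (x ≤ c)) = x :: xs := by
        rw [filter_eq_self]
        intro y hy
        simp only [decide_eq_true_eq]
        rcases mem_cons.mp hy with rfl | hy
        · exact hp
        · exact le_trans (hb y hy) hp
      rw [this]
    · rw [filter_cons_of_neg (by simp [hp])]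
      exact (filter_suf c xs hs).trans (suffix_cons x xs)

lemma getLast_min : ∀ (l : List ℕ) (h : l ≠ []), l.Pairwise (· ≥ ·) →
    ∀ x ∈ l, l.getLast h ≤ x
  | [x], _, _, y, hy => by simp_all
  | x :: y :: xs, _, h, z, hz => by
    have hs := (pairwise_cons.mp h).2
    have hb := (pairwise_cons.mp h).1
    rw [getLast_cons (by simp)]
    rcases mem_cons.mp hz with rfl | hz
    · exact le_trans (getLast_min (y :: xs) (by simp) hs y mem_cons_self) (hb y mem_cons_self)
    · exact getLast_min (y :: xs) (by simp) hs z hz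

/-- A list of natural numbers is a partition if it is nonincreasing
and all its parts are positive. -/
def IsPartition (l : List ℕ) : Prop :=
  l.Pairwise (· ≥ ·) ∧ ∀ x ∈ l, 0 < x

/-- The set `R^{s,i}`: partitions with exactly `s` parts whose largest and
smallest parts differ by at most one, together with the partition `[1^i]`. -/
def Rset (s i : ℕ) : Set (List ℕ) :=
  {η | IsPartition η ∧ η.length = s ∧ ∀ a ∈ η, ∀ b ∈ η, a ≤ b + 1}
    ∪ {List.replicate i 1}

/-- Lemma 11: a partition `λ` contains (as a contiguous subsequence) no
partition of `R^{s,i}` if and only if for every `η ∈ R^{s,i}` the multiset of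
parts of `η` is not a submultiset of the multiset of parts of `λ`
(equivalently, the monomial `p_η` does not divide `p_λ`). -/
theorem alternative_description_of_P (s i : ℕ) (hs : 1 ≤ s) (hi1 : 1 ≤ i)
    (hi2 : i ≤ s) (l : List ℕ) (hl : IsPartition l) :
    (∀ η ∈ Rset s i, ¬ η <:+: l) ↔
      ∀ η ∈ Rset s i, ¬ (↑η : Multiset ℕ) ≤ (↑l : Multiset ℕ) := by
  constructor
  · intro h η hη hle
    apply h η hη
    have hcount : ∀ x : ℕ, η.count x ≤ l.count x := by
      intro x
      have := Multiset.count_le_of_le x hle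
      simpa using this
    rcases hη with ⟨hηp, hlen, hdiff⟩ | hrepl
    · -- s-part case
      have hne : η ≠ [] := by intro e; rw [e] at hlen; simp at hlen; omega
      set k := η.getLast hne with hk
      have hkmem : k ∈ η := getLast_mem hne
      have hmin : ∀ x ∈ η, k ≤ x := getLast_min η hne hηp.1
      have hmax : ∀ x ∈ η, x ≤ k + 1 := fun x hx => hdiff x hx k hkmem
      have hηval : ∀ x ∈ η, x = k + 1 ∨ x = k := fun x hx => by
        have := hmin x hx; have := hmax x hx; omega
      have hηeq := two_val k η hηp.1 hηval
      set p : ℕ → Bool := fun x => decide (k ≤ x) && decide (x ≤ k+1) with hp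
      have htinf := filter_inf k l hl.1
      set t := l.filter p with ht
      have htsorted : t.Pairwise (· ≥ ·) := hl.1.filter _
      have htval : ∀ x ∈ t, x = k + 1 ∨ x = k := by
        intro x hx
        rw [ht, mem_filter, hp] at hx
        have := hx.2
        simp only [Bool.and_eq_true, decide_eq_true_eq] at this
        omega
      have hteq := two_val k t htsorted htval
      have hc1 : η.count (k+1) ≤ t.count (k+1) := by
        rw [ht, count_filter (by simp [hp])]
        exact hcount (k+1)
      have hc0 : η.count k ≤ t.count k := by
        rw [ht, count_filter (by simp [hp])]
        exact hcount k
      have : η <:+: t := by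
        rw [hηeq, hteq]
        exact suffix_prefix_infix (replicate_suffix _ hc1) (replicate_prefix _ hc0)
      exact this.trans htinf
    · -- [1^i] case
      simp only [Set.mem_singleton_iff] at hrepl
      subst hrepl
      have hsuf := filter_suf 1 l hl.1
      set t := l.filter (fun x => decide (x ≤ 1)) with ht
      have htone : ∀ x ∈ t, x = 1 := by
        intro x hx
        rw [ht, mem_filter] at hx
        have h1 := hl.2 x hx.1
        have h2 := hx.2
        simp only [decide_eq_true_eq] at h2
        omega
      have hteq : t = replicate (t.length) 1 := eq_replicate_of_mem htone
      have hclen : t.count 1 = t.length := count_eq_length.mpr (fun b hb => (htone b hb).symm)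
      have hcl : l.count 1 = t.count 1 := (count_filter (by simp)).symm
      have hi : i ≤ t.length := by
        have := hcount 1
        rw [count_replicate] at this
        simp at this
        omega
      have : replicate i 1 <:+ t := by
        rw [hteq]
        exact replicate_suffix _ hi
      exact (this.trans hsuf).isInfix
  · intro h η hη hinf
    exact h η hη (Multiset.coe_le.mpr hinf.sublist.subperm)
end
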